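/- For all p ∈ (1, 2] and all positive reals x, y, one has (x^{p/2} - y^{p/2})² ≥ x^p - y^p - p y^{p-1}(x - y). -/

import Mathlib

open Real

theorem sq_pow_half_diff_ge (p x y : ℝ) (hp : p ∈ Set.Ioc (1 : ℝ) 2)
    (hx : 0 < x) (hy : 0 < y) :
    x ^ p - y ^ p - p * y ^ (p - 1) * (x - y) ≤ (x ^ (p / 2) - y ^ (p / 2)) ^ 2 := by
  obtain ⟨hp1, hp2⟩ := hp
  have hs : -1 ≤ x / y - 1 := by
    have : 0 < x / y := div_pos hx hy
    linarith
  have hber := rpow_one_add_le_one_add_mul_self hs (p := p / 2) (by linarith) (by linarith)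
  rw [add_sub_cancel] at hber
  have hdiv : (x / y) ^ (p / 2) = x ^ (p / 2) / y ^ (p / 2) :=
    Real.div_rpow hx.le hy.le (p / 2)
  rw [hdiv] at hber
  have hyp2 : (0:ℝ) < y ^ (p / 2) := rpow_pos_of_pos hy _
  have hxp2 : (0:ℝ) < x ^ (p / 2) := rpow_pos_of_pos hx _
  have hx2 : x ^ (p / 2) * x ^ (p / 2) = x ^ p := by
    rw [← Real.rpow_add hx]; ring_nf
  have hy2 : y ^ (p / 2) * y ^ (p / 2) = y ^ p := by
    rw [← Real.rpow_add hy]; ring_nf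
  have hy1 : y ^ (p - 1) * y = y ^ p := by
    rw [← Real.rpow_add_one (ne_of_gt hy)]; ring_nf
  -- from hber: x^(p/2)/y^(p/2) ≤ 1 + (p/2)*(x/y - 1)
  have e1 : (x / y - 1) * y ^ p = y ^ (p - 1) * (x - y) := by
    rw [← hy1]; field_simp
  have key : x ^ (p / 2) * y ^ (p / 2) ≤ y ^ p + (p / 2) * (y ^ (p - 1) * (x - y)) := by
    have h := mul_le_mul_of_nonneg_right hber (le_of_lt (mul_pos hyp2 hyp2))
    have lhs_eq : x ^ (p / 2) / y ^ (p / 2) * (y ^ (p / 2) * y ^ (p / 2))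
        = x ^ (p / 2) * y ^ (p / 2) := by field_simp
    rw [lhs_eq, hy2] at h
    nlinarith [h, e1]
  nlinarith [key, hx2, hy2]
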